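/- Let g be a finite-dimensional real Lie algebra with an involutive Lie algebra automorphism σ whose (+1)-eigenspace h and (−1)-eigenspace m satisfy g = h ⊕ m and h = ⁅m,m⁆. Let B_m be a nondegenerate symmetric bilinear form on m that is invariant under the action of h, i.e. B_m(⁅h,u⁆,v) + B_m(u,⁅h,v⁆) = 0 for all h ∈ h and u,v ∈ m. Then there exists a unique symmetric bilinear form B on g such that B restricted to m × m equals B_m, B(h,m) = 0, and B is ad(g)-invariant (B(⁅x,y⁆,z) = B(x,⁅y,z⁆) for all x,y,z ∈ g). -/

import Mathlib

open TensorProduct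

namespace UIE

lemma riemann_symm {α : Type*} (F : α → α → α → α → ℝ)
    (sk1 : ∀ a b u v, F a b u v = -F b a u v)
    (sk2 : ∀ a b u v, F a b u v = -F a b v u)
    (bi : ∀ a b u v, F a b u v + F b u a v + F u a b v = 0)
    (a b u v : α) : F a b u v = F u v a b := by
  linarith [bi a b u v, bi b u v a, bi u v a b, bi v a b u,
    sk1 b u v a, sk2 u v b a, sk1 v b u a, sk2 v b a u,
    sk1 u v a b, sk2 b u a v, sk1 a b u v, sk2 a b u v,
    sk2 v a b u, sk1 v a u b, sk2 a b v u, sk1 u a b v, sk2 u a v b,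
    sk1 a u v b, sk2 b v u a, sk1 b v a u, sk2 a u b v]

variable {L : Type*} [LieRing L] [LieAlgebra ℝ L]
variable (H M : Submodule ℝ L)

section Defs

variable (hMM : ∀ u ∈ M, ∀ v ∈ M, ⁅u, v⁆ ∈ H)
variable (hHM : ∀ h ∈ H, ∀ m ∈ M, ⁅h, m⁆ ∈ M)
variable (hHH : ∀ x ∈ H, ∀ y ∈ H, ⁅x, y⁆ ∈ H)

/-- bracket `M × M → H` -/
def nu : ↥M →ₗ[ℝ] ↥M →ₗ[ℝ] ↥H :=
  LinearMap.mk₂ ℝ (fun u v => ⟨⁅(u : L), (v : L)⁆, hMM _ u.2 _ v.2⟩)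
    (fun x y z => by apply Subtype.ext; simp)
    (fun c x y => by apply Subtype.ext; simp)
    (fun x y z => by apply Subtype.ext; simp)
    (fun c x y => by apply Subtype.ext; simp)

@[simp] lemma nu_coe (u v : ↥M) : ((nu H M hMM u v : ↥H) : L) = ⁅(u : L), (v : L)⁆ := rfl

/-- action of `H` on `M` -/
def rho : ↥H →ₗ[ℝ] ↥M →ₗ[ℝ] ↥M :=
  LinearMap.mk₂ ℝ (fun h u => ⟨⁅(h : L), (u : L)⁆, hHM _ h.2 _ u.2⟩)
    (fun x y z => by apply Subtype.ext; simp)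
    (fun c x y => by apply Subtype.ext; simp)
    (fun x y z => by apply Subtype.ext; simp)
    (fun c x y => by apply Subtype.ext; simp)

@[simp] lemma rho_coe (h : ↥H) (u : ↥M) :
    ((rho H M hHM h u : ↥M) : L) = ⁅(h : L), (u : L)⁆ := rfl

/-- bracket on `H` -/
def brH : ↥H →ₗ[ℝ] ↥H →ₗ[ℝ] ↥H :=
  LinearMap.mk₂ ℝ (fun x y => ⟨⁅(x : L), (y : L)⁆, hHH _ x.2 _ y.2⟩)
    (fun x y z => by apply Subtype.ext; simp)
    (fun c x y => by apply Subtype.ext; simp)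
    (fun x y z => by apply Subtype.ext; simp)
    (fun c x y => by apply Subtype.ext; simp)

@[simp] lemma brH_coe (x y : ↥H) : ((brH H hHH x y : ↥H) : L) = ⁅(x : L), (y : L)⁆ := rfl

variable (Bm : LinearMap.BilinForm ℝ ↥M)

/-- `Psi h t` : the lift of `(u,v) ↦ Bm ⁅h,u⁆ v` to the tensor square, linear in `h`. -/
noncomputable def Psi : ↥H →ₗ[ℝ] (↥M ⊗[ℝ] ↥M) →ₗ[ℝ] ℝ :=
  (TensorProduct.lift.equiv (RingHom.id ℝ) ↥M ↥M ℝ).toLinearMap ∘ₗ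
    (LinearMap.llcomp ℝ ↥M ↥M (↥M →ₗ[ℝ] ℝ) Bm) ∘ₗ (rho H M hHM)

@[simp] lemma Psi_apply (h : ↥H) (u v : ↥M) :
    Psi H M hHM Bm h (u ⊗ₜ v) = Bm (rho H M hHM h u) v := rfl

/-- the map `M ⊗ M → H` induced by the bracket -/
noncomputable def beta : (↥M ⊗[ℝ] ↥M) →ₗ[ℝ] ↥H := TensorProduct.lift (nu H M hMM)

@[simp] lemma beta_apply (u v : ↥M) : beta H M hMM (u ⊗ₜ v) = nu H M hMM u v := rfl

end Defs

section Lemmas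

variable (hMM : ∀ u ∈ M, ∀ v ∈ M, ⁅u, v⁆ ∈ H)
variable (hHM : ∀ h ∈ H, ∀ m ∈ M, ⁅h, m⁆ ∈ M)
variable (hHH : ∀ x ∈ H, ∀ y ∈ H, ⁅x, y⁆ ∈ H)
variable (Bm : LinearMap.BilinForm ℝ ↥M)
variable (hBmsymm : ∀ u v : ↥M, Bm u v = Bm v u)
variable (hBminv : ∀ (h : ↥H) (u v : ↥M),
    Bm (rho H M hHM h u) v + Bm u (rho H M hHM h v) = 0)
variable (hHspan : H = Submodule.span ℝ {z : L | ∃ x ∈ M, ∃ y ∈ M, ⁅x, y⁆ = z})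

include hBmsymm hBminv in
/-- skew-symmetry of the form in the last two arguments -/
lemma sk2 (h : ↥H) (u v : ↥M) :
    Bm (rho H M hHM h u) v = -Bm (rho H M hHM h v) u := by
  have := hBminv h u v
  have h2 := hBmsymm u (rho H M hHM h v)
  linarith

include hBmsymm hBminv in
/-- "pair-exchange" symmetry (the curvature-tensor identity) -/
lemma F_swap (a b u v : ↥M) :
    Bm (rho H M hHM (nu H M hMM a b) u) v
      = Bm (rho H M hHM (nu H M hMM u v) a) b := by
  apply riemann_symm (fun a b u v => Bm (rho H M hHM (nu H M hMM a b) u) v)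
  · intro a b u v
    have hn : nu H M hMM b a = -nu H M hMM a b := by
      apply Subtype.ext
      simp only [NegMemClass.coe_neg, nu_coe]
      exact (lie_skew (b : L) (a : L)).symm
    rw [hn]; simp
  · intro a b u v
    exact sk2 H M hHM Bm hBmsymm hBminv _ u v
  · intro a b u v
    have h0 : rho H M hHM (nu H M hMM a b) u + rho H M hHM (nu H M hMM b u) a
        + rho H M hHM (nu H M hMM u a) b = (0 : ↥M) := by
      apply Subtype.ext
      simp only [Submodule.coe_add, rho_coe, nu_coe, ZeroMemClass.coe_zero]
      have hj := lie_jacobi (u : L) (a : L) (b : L)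
      rw [← lie_skew ((u:L)) ⁅(a:L),(b:L)⁆, ← lie_skew ((a:L)) ⁅(b:L),(u:L)⁆,
        ← lie_skew ((b:L)) ⁅(u:L),(a:L)⁆, ← neg_add, ← neg_add, neg_eq_zero] at hj
      exact hj
    have := congrArg (fun w => Bm w v) h0
    simp only [map_add, LinearMap.add_apply, map_zero, LinearMap.zero_apply] at this
    linarith

include hBmsymm hBminv in
lemma Psi_nu (a b : ↥M) (t : ↥M ⊗[ℝ] ↥M) :
    Psi H M hHM Bm (nu H M hMM a b) t
      = Bm (rho H M hHM (beta H M hMM t) a) b := by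
  induction t using TensorProduct.induction_on with
  | zero => simp
  | tmul u v => rw [Psi_apply, beta_apply]; exact F_swap H M hMM hHM Bm hBmsymm hBminv a b u v
  | add x y hx hy => simp [map_add, hx, hy]

include hHspan in
lemma mem_of_span (K : Submodule ℝ ↥H) (hK : ∀ u v : ↥M, nu H M hMM u v ∈ K)
    (h : ↥H) : h ∈ K := by
  have h1 : (H : Submodule ℝ L) ≤ Submodule.map H.subtype K := by
    conv_lhs => rw [hHspan]
    apply Submodule.span_le.mpr
    rintro z ⟨x, hx, y, hy, rfl⟩
    exact ⟨nu H M hMM ⟨x, hx⟩ ⟨y, hy⟩, hK _ _, rfl⟩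
  obtain ⟨k, hk, hk2⟩ := h1 h.2
  have : k = h := Subtype.ext hk2
  rwa [this] at hk

include hHspan in
lemma fun_eq_zero (f : ↥H →ₗ[ℝ] ℝ) (hf : ∀ u v : ↥M, f (nu H M hMM u v) = 0)
    (h : ↥H) : f h = 0 :=
  mem_of_span H M hMM hHspan (LinearMap.ker f) hf h

include hHspan hBmsymm hBminv in
lemma Psi_ker (h : ↥H) (t : ↥M ⊗[ℝ] ↥M) (ht : beta H M hMM t = 0) :
    Psi H M hHM Bm h t = 0 := by
  have := fun_eq_zero H M hMM hHspan ((Psi H M hHM Bm).flip t) (fun u v => by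
    simp only [LinearMap.flip_apply]
    rw [Psi_nu H M hMM hHM Bm hBmsymm hBminv, ht]
    simp) h
  simpa using this

end Lemmas

section BHsec

variable (hMM : ∀ u ∈ M, ∀ v ∈ M, ⁅u, v⁆ ∈ H)
variable (hHM : ∀ h ∈ H, ∀ m ∈ M, ⁅h, m⁆ ∈ M)
variable (hHH : ∀ x ∈ H, ∀ y ∈ H, ⁅x, y⁆ ∈ H)
variable (Bm : LinearMap.BilinForm ℝ ↥M)
variable (hBmsymm : ∀ u v : ↥M, Bm u v = Bm v u)
variable (hBminv : ∀ (h : ↥H) (u v : ↥M),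
    Bm (rho H M hHM h u) v + Bm u (rho H M hHM h v) = 0)
variable (hHspan : H = Submodule.span ℝ {z : L | ∃ x ∈ M, ∃ y ∈ M, ⁅x, y⁆ = z})
variable (s : ↥H →ₗ[ℝ] ↥M ⊗[ℝ] ↥M)
variable (hs : ∀ h : ↥H, beta H M hMM (s h) = h)

/-- the extension of the form to `H` -/
noncomputable def BH : LinearMap.BilinForm ℝ ↥H :=
  LinearMap.mk₂ ℝ (fun h h' => Psi H M hHM Bm h' (s h))
    (fun x y z => by simp) (fun c x y => by simp)
    (fun x y z => by simp) (fun c x y => by simp)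

@[simp] lemma BH_apply (h h' : ↥H) :
    BH H M hHM Bm s h h' = Psi H M hHM Bm h' (s h) := rfl

include hBmsymm hBminv hHspan hs in
lemma BH_nu_left (u v : ↥M) (h' : ↥H) :
    BH H M hHM Bm s (nu H M hMM u v) h' = Bm (rho H M hHM h' u) v := by
  have hz : beta H M hMM (s (nu H M hMM u v) - u ⊗ₜ v) = 0 := by
    rw [map_sub, hs, beta_apply, sub_self]
  have := Psi_ker H M hMM hHM Bm hBmsymm hBminv hHspan h' _ hz
  rw [map_sub] at this
  have h2 : Psi H M hHM Bm h' (s (nu H M hMM u v)) = Psi H M hHM Bm h' (u ⊗ₜ v) := by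
    linarith
  rw [BH_apply, h2, Psi_apply]

include hBmsymm hBminv hs in
lemma BH_nu_right (h : ↥H) (c d : ↥M) :
    BH H M hHM Bm s h (nu H M hMM c d) = Bm (rho H M hHM h c) d := by
  rw [BH_apply, Psi_nu H M hMM hHM Bm hBmsymm hBminv, hs]

include hBmsymm hBminv hHspan hs in
lemma BH_symm (h h' : ↥H) :
    BH H M hHM Bm s h h' = BH H M hHM Bm s h' h := by
  have := fun_eq_zero H M hMM hHspan
    (BH H M hHM Bm s h - (BH H M hHM Bm s).flip h) (fun c d => by
      show BH H M hHM Bm s h (nu H M hMM c d)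
        - BH H M hHM Bm s (nu H M hMM c d) h = 0
      rw [BH_nu_right H M hMM hHM Bm hBmsymm hBminv s hs,
        BH_nu_left H M hMM hHM Bm hBmsymm hBminv hHspan s hs, sub_self]) h'
  have h2 : (BH H M hHM Bm s h - (BH H M hHM Bm s).flip h) h'
      = BH H M hHM Bm s h h' - BH H M hHM Bm s h' h := rfl
  rw [h2] at this
  linarith

include hBmsymm hBminv hHspan hs in
lemma BH_inv (x y z : ↥H) :
    BH H M hHM Bm s (brH H hHH x y) z = BH H M hHM Bm s x (brH H hHH y z) := by
  have := fun_eq_zero H M hMM hHspan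
    (BH H M hHM Bm s (brH H hHH x y)
      - (BH H M hHM Bm s x) ∘ₗ (brH H hHH y)) (fun e f => by
      simp only [LinearMap.sub_apply, LinearMap.comp_apply]
      have hb : brH H hHH y (nu H M hMM e f)
          = nu H M hMM (rho H M hHM y e) f + nu H M hMM e (rho H M hHM y f) := by
        apply Subtype.ext
        simp only [Submodule.coe_add, brH_coe, nu_coe, rho_coe]
        exact leibniz_lie _ _ _
      have hr : rho H M hHM (brH H hHH x y) e
          = rho H M hHM x (rho H M hHM y e) - rho H M hHM y (rho H M hHM x e) := by
        apply Subtype.ext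
        simp only [AddSubgroupClass.coe_sub, brH_coe, rho_coe]
        exact lie_lie _ _ _
      rw [hb, map_add, BH_nu_right H M hMM hHM Bm hBmsymm hBminv s hs,
        BH_nu_right H M hMM hHM Bm hBmsymm hBminv s hs,
        BH_nu_right H M hMM hHM Bm hBmsymm hBminv s hs, hr, map_sub,
        LinearMap.sub_apply]
      have := hBminv y (rho H M hHM x e) f
      linarith) z
  simp only [LinearMap.sub_apply, LinearMap.comp_apply] at this
  linarith

variable (hcompl : IsCompl H M)

/-- the full bilinear form on `L` -/
noncomputable def Bfull : LinearMap.BilinForm ℝ L :=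
  LinearMap.mk₂ ℝ (fun x y =>
    BH H M hHM Bm s (H.linearProjOfIsCompl M hcompl x) (H.linearProjOfIsCompl M hcompl y)
      + Bm (M.linearProjOfIsCompl H hcompl.symm x) (M.linearProjOfIsCompl H hcompl.symm y))
    (fun x y z => by simp only [map_add, LinearMap.add_apply]; ring)
    (fun c x y => by
      simp only [map_smul, LinearMap.smul_apply, smul_eq_mul]; ring)
    (fun x y z => by simp only [map_add, LinearMap.add_apply]; ring)
    (fun c x y => by
      simp only [map_smul, LinearMap.smul_apply, smul_eq_mul]; ring)

lemma Bfull_apply (x y : L) :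
    Bfull H M hHM Bm s hcompl x y
      = BH H M hHM Bm s (H.linearProjOfIsCompl M hcompl x) (H.linearProjOfIsCompl M hcompl y)
        + Bm (M.linearProjOfIsCompl H hcompl.symm x) (M.linearProjOfIsCompl H hcompl.symm y) :=
  rfl

lemma Bfull_HH (h h' : ↥H) :
    Bfull H M hHM Bm s hcompl ↑h ↑h' = BH H M hHM Bm s h h' := by
  erw [Bfull_apply, Submodule.linearProjOfIsCompl_apply_left,
    Submodule.linearProjOfIsCompl_apply_left,
    Submodule.linearProjOfIsCompl_apply_right' _ h.2,
    Submodule.linearProjOfIsCompl_apply_right' _ h'.2]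
  simp

lemma Bfull_MM (u v : ↥M) :
    Bfull H M hHM Bm s hcompl ↑u ↑v = Bm u v := by
  erw [Bfull_apply, Submodule.linearProjOfIsCompl_apply_left,
    Submodule.linearProjOfIsCompl_apply_left,
    Submodule.linearProjOfIsCompl_apply_right' _ u.2,
    Submodule.linearProjOfIsCompl_apply_right' _ v.2]
  simp

lemma Bfull_HM (h : ↥H) (u : ↥M) :
    Bfull H M hHM Bm s hcompl ↑h ↑u = 0 := by
  erw [Bfull_apply, Submodule.linearProjOfIsCompl_apply_right' hcompl.symm h.2,
    Submodule.linearProjOfIsCompl_apply_right' hcompl u.2]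
  simp

lemma Bfull_MH (u : ↥M) (h : ↥H) :
    Bfull H M hHM Bm s hcompl ↑u ↑h = 0 := by
  erw [Bfull_apply, Submodule.linearProjOfIsCompl_apply_right' hcompl u.2,
    Submodule.linearProjOfIsCompl_apply_right' hcompl.symm h.2]
  simp

include hBmsymm hBminv hHspan hs in
lemma Bfull_symm (x y : L) :
    Bfull H M hHM Bm s hcompl x y = Bfull H M hHM Bm s hcompl y x := by
  rw [Bfull_apply, Bfull_apply,
    BH_symm H M hMM hHM Bm hBmsymm hBminv hHspan s hs, hBmsymm]

include hHH hBmsymm hBminv hHspan hs in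
lemma Bfull_inv (x y z : L) :
    Bfull H M hHM Bm s hcompl ⁅x, y⁆ z = Bfull H M hHM Bm s hcompl x ⁅y, z⁆ := by
  -- coercion facts
  have ebr : ∀ (a b : ↥H), ⁅(a : L), (b : L)⁆ = ((brH H hHH a b : ↥H) : L) := fun a b => rfl
  have erho : ∀ (a : ↥H) (u : ↥M), ⁅(a : L), (u : L)⁆ = ((rho H M hHM a u : ↥M) : L) :=
    fun a u => rfl
  have erho' : ∀ (u : ↥M) (a : ↥H),
      ⁅(u : L), (a : L)⁆ = (((-(rho H M hHM a u)) : ↥M) : L) := fun u a => by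
    rw [NegMemClass.coe_neg, rho_coe]
    exact (lie_skew _ _).symm
  have enu : ∀ (u v : ↥M), ⁅(u : L), (v : L)⁆ = ((nu H M hMM u v : ↥H) : L) := fun u v => rfl
  -- the eight cases
  have cHHH : ∀ (a b c : ↥H),
      Bfull H M hHM Bm s hcompl ⁅(a : L), (b : L)⁆ ↑c
        = Bfull H M hHM Bm s hcompl ↑a ⁅(b : L), (c : L)⁆ := fun a b c => by
    rw [ebr a b, ebr b c, Bfull_HH, Bfull_HH]
    exact BH_inv H M hMM hHM hHH Bm hBmsymm hBminv hHspan s hs a b c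
  have cHHM : ∀ (a b : ↥H) (w : ↥M),
      Bfull H M hHM Bm s hcompl ⁅(a : L), (b : L)⁆ ↑w
        = Bfull H M hHM Bm s hcompl ↑a ⁅(b : L), (w : L)⁆ := fun a b w => by
    rw [ebr a b, erho b w, Bfull_HM, Bfull_HM]
  have cHMH : ∀ (a : ↥H) (u : ↥M) (c : ↥H),
      Bfull H M hHM Bm s hcompl ⁅(a : L), (u : L)⁆ ↑c
        = Bfull H M hHM Bm s hcompl ↑a ⁅(u : L), (c : L)⁆ := fun a u c => by
    rw [erho a u, erho' u c, Bfull_MH, Bfull_HM]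
  have cHMM : ∀ (a : ↥H) (u v : ↥M),
      Bfull H M hHM Bm s hcompl ⁅(a : L), (u : L)⁆ ↑v
        = Bfull H M hHM Bm s hcompl ↑a ⁅(u : L), (v : L)⁆ := fun a u v => by
    rw [erho a u, enu u v, Bfull_MM, Bfull_HH,
      BH_nu_right H M hMM hHM Bm hBmsymm hBminv s hs]
  have cMHH : ∀ (u : ↥M) (a c : ↥H),
      Bfull H M hHM Bm s hcompl ⁅(u : L), (a : L)⁆ ↑c
        = Bfull H M hHM Bm s hcompl ↑u ⁅(a : L), (c : L)⁆ := fun u a c => by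
    rw [erho' u a, ebr a c, Bfull_MH, Bfull_MH]
  have cMHM : ∀ (u : ↥M) (a : ↥H) (v : ↥M),
      Bfull H M hHM Bm s hcompl ⁅(u : L), (a : L)⁆ ↑v
        = Bfull H M hHM Bm s hcompl ↑u ⁅(a : L), (v : L)⁆ := fun u a v => by
    rw [erho' u a, erho a v, Bfull_MM, Bfull_MM]
    have := hBminv a u v
    simp only [map_neg, LinearMap.neg_apply]
    linarith
  have cMMH : ∀ (u v : ↥M) (c : ↥H),
      Bfull H M hHM Bm s hcompl ⁅(u : L), (v : L)⁆ ↑c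
        = Bfull H M hHM Bm s hcompl ↑u ⁅(v : L), (c : L)⁆ := fun u v c => by
    rw [enu u v, erho' v c, Bfull_HH, Bfull_MM,
      BH_nu_left H M hMM hHM Bm hBmsymm hBminv hHspan s hs]
    have := hBminv c u v
    simp only [map_neg]
    linarith
  have cMMM : ∀ (u v w : ↥M),
      Bfull H M hHM Bm s hcompl ⁅(u : L), (v : L)⁆ ↑w
        = Bfull H M hHM Bm s hcompl ↑u ⁅(v : L), (w : L)⁆ := fun u v w => by
    rw [enu u v, enu v w, Bfull_HM, Bfull_MH]
  -- decompose and conclude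
  have hx : (↑(H.linearProjOfIsCompl M hcompl x) : L) + ↑(M.linearProjOfIsCompl H hcompl.symm x) = x :=
    Submodule.projection_add_projection_eq_self hcompl x
  have hy : (↑(H.linearProjOfIsCompl M hcompl y) : L) + ↑(M.linearProjOfIsCompl H hcompl.symm y) = y :=
    Submodule.projection_add_projection_eq_self hcompl y
  have hz : (↑(H.linearProjOfIsCompl M hcompl z) : L) + ↑(M.linearProjOfIsCompl H hcompl.symm z) = z :=
    Submodule.projection_add_projection_eq_self hcompl z
  set xa := H.linearProjOfIsCompl M hcompl x
  set xb := M.linearProjOfIsCompl H hcompl.symm x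
  set ya := H.linearProjOfIsCompl M hcompl y
  set yb := M.linearProjOfIsCompl H hcompl.symm y
  set za := H.linearProjOfIsCompl M hcompl z
  set zb := M.linearProjOfIsCompl H hcompl.symm z
  rw [← hx, ← hy, ← hz]
  simp only [add_lie, lie_add, map_add, LinearMap.add_apply]
  rw [cHHH xa ya za, cHHM xa ya zb, cHMH xa yb za, cHMM xa yb zb,
    cMHH xb ya za, cMHM xb ya zb, cMMH xb yb za, cMMM xb yb zb]

end BHsec

end UIE

open UIE in
/-- Given a symmetric decomposition `g = h ⊕ m` with `h = ⁅m,m⁆` and a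
nondegenerate symmetric `ad(h)`-invariant bilinear form `B_m` on `m`, there is a unique
symmetric bilinear form `B` on `g` extending `B_m`, with `B(h,m) = 0`, which is
`ad(g)`-invariant. -/
theorem unique_invariant_extension
    (L : Type*) [LieRing L] [LieAlgebra ℝ L] [FiniteDimensional ℝ L]
    (σ : L →ₗ⁅ℝ⁆ L) (hσ : ∀ x, σ (σ x) = x)
    (H M : Submodule ℝ L)
    (hH : ∀ x, x ∈ H ↔ σ x = x)
    (hM : ∀ x, x ∈ M ↔ σ x = -x)
    (hcompl : IsCompl H M)
    (hHspan : H = Submodule.span ℝ {z : L | ∃ x ∈ M, ∃ y ∈ M, ⁅x, y⁆ = z})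
    (hbracket : ∀ h ∈ H, ∀ m ∈ M, ⁅h, m⁆ ∈ M)
    (Bm : LinearMap.BilinForm ℝ ↥M)
    (hBmsymm : ∀ u v : ↥M, Bm u v = Bm v u)
    (hBmnd : Bm.Nondegenerate)
    (hBminv : ∀ (h : L) (hh : h ∈ H) (u v : ↥M),
      Bm ⟨⁅h, (u : L)⁆, hbracket h hh u u.2⟩ v
        + Bm u ⟨⁅h, (v : L)⁆, hbracket h hh v v.2⟩ = 0) :
    ∃! B : LinearMap.BilinForm ℝ L,
      (∀ u v : ↥M, B u v = Bm u v) ∧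
      (∀ h ∈ H, ∀ m ∈ M, B h m = 0) ∧
      (∀ x y : L, B x y = B y x) ∧
      (∀ x y z : L, B ⁅x, y⁆ z = B x ⁅y, z⁆) := by
  classical
  have hMM : ∀ u ∈ M, ∀ v ∈ M, ⁅u, v⁆ ∈ H := by
    intro u hu v hv
    rw [hHspan]
    exact Submodule.subset_span ⟨u, hu, v, hv, rfl⟩
  have hHH : ∀ x ∈ H, ∀ y ∈ H, ⁅x, y⁆ ∈ H := by
    intro x hx y hy
    rw [hH] at hx hy ⊢
    rw [LieHom.map_lie, hx, hy]
  have hBminv' : ∀ (h : ↥H) (u v : ↥M),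
      Bm (rho H M hbracket h u) v + Bm u (rho H M hbracket h v) = 0 :=
    fun h u v => hBminv ↑h h.2 u v
  have hsurj : LinearMap.range (beta H M hMM) = ⊤ := by
    rw [Submodule.eq_top_iff']
    intro h
    exact mem_of_span H M hMM hHspan (LinearMap.range (beta H M hMM))
      (fun u v => LinearMap.mem_range.mpr ⟨u ⊗ₜ v, rfl⟩) h
  obtain ⟨s, hs0⟩ := (beta H M hMM).exists_rightInverse_of_surjective hsurj
  have hs : ∀ h : ↥H, beta H M hMM (s h) = h := fun h => DFunLike.congr_fun hs0 h
  refine ⟨Bfull H M hbracket Bm s hcompl, ⟨?_, ?_, ?_, ?_⟩, ?_⟩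
  · exact fun u v => Bfull_MM H M hbracket Bm s hcompl u v
  · intro h hh m hm
    exact Bfull_HM H M hbracket Bm s hcompl ⟨h, hh⟩ ⟨m, hm⟩
  · exact fun x y =>
      Bfull_symm H M hMM hbracket Bm hBmsymm hBminv' hHspan s hs hcompl x y
  · exact fun x y z =>
      Bfull_inv H M hMM hbracket hHH Bm hBmsymm hBminv' hHspan s hs hcompl x y z
  · rintro B' ⟨hB1, hB2, hB3, hB4⟩
    have key : ∀ (h h' : ↥H),
        B' ↑h ↑h' = Bfull H M hbracket Bm s hcompl ↑h ↑h' := by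
      intro h h'
      have hf : ∀ u v : ↥M,
          (((B' ↑h - Bfull H M hbracket Bm s hcompl ↑h) : L →ₗ[ℝ] ℝ)
            ∘ₗ H.subtype) (nu H M hMM u v) = 0 := by
        intro u v
        have e1 : B' ↑h ⁅(u : L), (v : L)⁆ = Bm (rho H M hbracket h u) v := by
          rw [← hB4 ↑h ↑u ↑v]
          have ec : ⁅(h : L), (u : L)⁆ = ((rho H M hbracket h u : ↥M) : L) := rfl
          rw [ec]
          exact hB1 _ v
        have e2 : Bfull H M hbracket Bm s hcompl ↑h ⁅(u : L), (v : L)⁆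
            = Bm (rho H M hbracket h u) v := by
          have ec : ⁅(u : L), (v : L)⁆ = ((nu H M hMM u v : ↥H) : L) := rfl
          rw [ec, Bfull_HH,
            BH_nu_right H M hMM hbracket Bm hBmsymm hBminv' s hs]
        have e3 : (((B' ↑h - Bfull H M hbracket Bm s hcompl ↑h) : L →ₗ[ℝ] ℝ)
            ∘ₗ H.subtype) (nu H M hMM u v)
            = B' ↑h ⁅(u : L), (v : L)⁆
              - Bfull H M hbracket Bm s hcompl ↑h ⁅(u : L), (v : L)⁆ := rfl
        rw [e3, e1, e2, sub_self]
      have := fun_eq_zero H M hMM hHspan _ hf h'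
      have e4 : (((B' ↑h - Bfull H M hbracket Bm s hcompl ↑h) : L →ₗ[ℝ] ℝ)
          ∘ₗ H.subtype) h'
          = B' ↑h ↑h' - Bfull H M hbracket Bm s hcompl ↑h ↑h' := rfl
      rw [e4] at this
      linarith
    apply LinearMap.ext; intro x; apply LinearMap.ext; intro y
    have hx : (↑(H.linearProjOfIsCompl M hcompl x) : L) + ↑(M.linearProjOfIsCompl H hcompl.symm x) = x :=
      Submodule.projection_add_projection_eq_self hcompl x
    have hy : (↑(H.linearProjOfIsCompl M hcompl y) : L) + ↑(M.linearProjOfIsCompl H hcompl.symm y) = y :=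
      Submodule.projection_add_projection_eq_self hcompl y
    set xa := H.linearProjOfIsCompl M hcompl x
    set xb := M.linearProjOfIsCompl H hcompl.symm x
    set ya := H.linearProjOfIsCompl M hcompl y
    set yb := M.linearProjOfIsCompl H hcompl.symm y
    rw [← hx, ← hy]
    simp only [map_add, LinearMap.add_apply]
    have t1 := key xa ya
    have t2 : B' ↑xa ↑yb = Bfull H M hbracket Bm s hcompl ↑xa ↑yb := by
      rw [hB2 ↑xa xa.2 ↑yb yb.2, Bfull_HM]
    have t3 : B' ↑xb ↑ya = Bfull H M hbracket Bm s hcompl ↑xb ↑ya := by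
      rw [hB3, hB2 ↑ya ya.2 ↑xb xb.2, Bfull_MH]
    have t4 : B' ↑xb ↑yb = Bfull H M hbracket Bm s hcompl ↑xb ↑yb := by
      rw [hB1 xb yb, Bfull_MM]
    rw [t1, t2, t3, t4]
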